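/- Let x, â, d ∈ ℝ^n with d ≥ 0, and let Γ ∈ {0, 1, …, n}. Define the cardinality-constrained uncertainty set U(Γ) = {a ∈ ℝ^n : a_i ∈ [â_i − d_i, â_i + d_i] for all i, and a_i ≠ â_i for at most Γ indices i}. Then sup_{a ∈ U(Γ)} Σ_{i=1}^n a_i x_i = Σ_{i=1}^n â_i x_i + max_{S ⊆ {1,…,n}, |S| = Γ} Σ_{i∈S} d_i |x_i|. Consequently, x satisfies Σ_i a_i x_i ≤ b for all a ∈ U(Γ) if and only if x satisfies the Bertsimas–Sim constraint Σ_i â_i x_i + max_{|S|=Γ} Σ_{i∈S} d_i|x_i| ≤ b. -/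

import Mathlib

/-- For the cardinality-constrained uncertainty set `U(Γ)` of Bertsimas–Sim,
`sup_{a ∈ U(Γ)} Σ_i a_i x_i = Σ_i â_i x_i + max_{|S| = Γ} Σ_{i∈S} d_i |x_i|`; consequently
`Σ_i a_i x_i ≤ b` holds for all `a ∈ U(Γ)` iff the Bertsimas–Sim constraint holds. -/
theorem cardinality_constrained_sup_and_constraint
    (n : ℕ) (x ahat d : Fin n → ℝ) (hd : ∀ i, 0 ≤ d i)
    (Γ : ℕ) (hΓ : Γ ≤ n) (b : ℝ) :
    sSup ((fun a => ∑ i, a i * x i) ''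
        {a : Fin n → ℝ | (∀ i, a i ∈ Set.Icc (ahat i - d i) (ahat i + d i)) ∧
          (Finset.univ.filter fun i => a i ≠ ahat i).card ≤ Γ}) =
      (∑ i, ahat i * x i) +
        (Finset.univ.powersetCard Γ).sup'
          (Finset.powersetCard_nonempty.mpr (by simpa using hΓ))
          (fun S => ∑ i ∈ S, d i * |x i|) ∧
    ((∀ a ∈ {a : Fin n → ℝ | (∀ i, a i ∈ Set.Icc (ahat i - d i) (ahat i + d i)) ∧
          (Finset.univ.filter fun i => a i ≠ ahat i).card ≤ Γ},
        ∑ i, a i * x i ≤ b) ↔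
      (∑ i, ahat i * x i) +
        (Finset.univ.powersetCard Γ).sup'
          (Finset.powersetCard_nonempty.mpr (by simpa using hΓ))
          (fun S => ∑ i ∈ S, d i * |x i|) ≤ b) := by
  set U : Set (Fin n → ℝ) :=
    {a : Fin n → ℝ | (∀ i, a i ∈ Set.Icc (ahat i - d i) (ahat i + d i)) ∧
      (Finset.univ.filter fun i => a i ≠ ahat i).card ≤ Γ} with hU
  set ne : (Finset.univ.powersetCard Γ : Finset (Finset (Fin n))).Nonempty :=
    Finset.powersetCard_nonempty.mpr (by simpa using hΓ)
  set M : ℝ := (∑ i, ahat i * x i) +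
      (Finset.univ.powersetCard Γ).sup' ne (fun S => ∑ i ∈ S, d i * |x i|) with hM
  -- upper bound
  have hub : ∀ a ∈ U, ∑ i, a i * x i ≤ M := by
    intro a ha
    obtain ⟨hbox, hcard⟩ := ha
    set T := Finset.univ.filter fun i => a i ≠ ahat i with hT
    obtain ⟨S, hTS, hSu, hScard⟩ := Finset.exists_subsuperset_card_eq
      (T.subset_univ) hcard (by simpa using hΓ)
    have hstep : ∀ i, a i * x i ≤ ahat i * x i + (if i ∈ S then d i * |x i| else 0) := by
      intro i
      by_cases hiT : i ∈ T
      · have hiS : i ∈ S := hTS hiT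
        simp only [hiS, if_pos]
        have h1 : a i * x i - ahat i * x i = (a i - ahat i) * x i := by ring
        have h2 : (a i - ahat i) * x i ≤ d i * |x i| := by
          calc (a i - ahat i) * x i ≤ |(a i - ahat i) * x i| := le_abs_self _
            _ = |a i - ahat i| * |x i| := abs_mul _ _
            _ ≤ d i * |x i| := by
                apply mul_le_mul_of_nonneg_right _ (abs_nonneg _)
                rw [abs_le]
                obtain ⟨hl, hr⟩ := hbox i
                constructor <;> linarith
        linarith
      · have : a i = ahat i := by
          by_contra h
          exact hiT (by simp [hT, h])
        rw [this]
        split <;> [skip; simp]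
        nlinarith [hd i, abs_nonneg (x i)]
    calc ∑ i, a i * x i ≤ ∑ i, (ahat i * x i + (if i ∈ S then d i * |x i| else 0)) :=
            Finset.sum_le_sum fun i _ => hstep i
      _ = (∑ i, ahat i * x i) + ∑ i ∈ S, d i * |x i| := by
            rw [Finset.sum_add_distrib, Finset.sum_ite_mem, Finset.univ_inter]
      _ ≤ M := by
            apply add_le_add le_rfl
            exact Finset.le_sup' (fun S => ∑ i ∈ S, d i * |x i|) (Finset.mem_powersetCard.mpr ⟨Finset.subset_univ _, hScard⟩)
  -- attainment
  obtain ⟨S, hSmem, hSeq⟩ := Finset.exists_mem_eq_sup' ne (fun S => ∑ i ∈ S, d i * |x i|)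
  have hScard : S.card = Γ := (Finset.mem_powersetCard.mp hSmem).2
  set a0 : Fin n → ℝ := fun i =>
    ahat i + (if i ∈ S then d i * (if 0 ≤ x i then 1 else -1) else 0) with ha0
  have ha0U : a0 ∈ U := by
    constructor
    · intro i
      simp only [ha0, Set.mem_Icc]
      have := hd i
      split_ifs <;> constructor <;> linarith
    · calc (Finset.univ.filter fun i => a0 i ≠ ahat i).card ≤ S.card := by
            apply Finset.card_le_card
            intro i hi
            simp only [Finset.mem_filter, ha0] at hi
            by_contra h
            exact hi.2 (by simp [h])
        _ = Γ := hScard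
  have ha0val : ∑ i, a0 i * x i = M := by
    have : ∀ i, a0 i * x i = ahat i * x i + (if i ∈ S then d i * |x i| else 0) := by
      intro i
      simp only [ha0]
      rcases le_or_gt 0 (x i) with h | h
      · simp [h, abs_of_nonneg h]; split <;> ring
      · rw [abs_of_neg h]
        simp [not_le.mpr h]; split <;> ring
    rw [Finset.sum_congr rfl fun i _ => this i, Finset.sum_add_distrib,
      Finset.sum_ite_mem, Finset.univ_inter, hM, hSeq]
  have hmem : M ∈ (fun a => ∑ i, a i * x i) '' U := ⟨a0, ha0U, ha0val⟩
  have hsup : sSup ((fun a => ∑ i, a i * x i) '' U) = M := by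
    apply IsGreatest.csSup_eq
    exact ⟨hmem, by rintro y ⟨a, haU, rfl⟩; exact hub a haU⟩
  refine ⟨hsup, ⟨fun h => ?_, fun h a haU => (hub a haU).trans h⟩⟩
  rw [← ha0val]; exact h a0 ha0U
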